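/- Let α > 0, let φ₁, …, φ_p be Lipschitz DC functions on ℝ, and let g be a continuous function on [0, α] such that g(x) ∈ {φ₁(x), …, φ_p(x)} for every x ∈ (0, α). Then there exist convex Lipschitz functions y₁, y₂ on [0, α] with g(x) = y₁(x) − y₂(x) for all x ∈ [0, α]; in other words, g is a difference of two convex Lipschitz functions on [0, α]. -/

import Mathlib

open Set Filter Topology MeasureTheory

noncomputable section

namespace DCMix

/-- Right slope (one-sided derivative) of a function at a point. -/
def rd (ψ : ℝ → ℝ) (x : ℝ) : ℝ := sInf (slope ψ x '' Ioi x)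

section ConvexAPI

variable {ψ ψ' : ℝ → ℝ} {K : ℝ}

theorem slope_abs_le (hl : ∀ x y, |ψ x - ψ y| ≤ K * |x - y|) {x y : ℝ} (hxy : x ≠ y) :
    |slope ψ x y| ≤ K := by
  rw [slope_def_field, abs_div]
  rw [div_le_iff₀ (by rw [abs_pos]; exact sub_ne_zero.2 (Ne.symm hxy))]
  calc |ψ y - ψ x| ≤ K * |y - x| := by rw [abs_sub_comm (ψ y), abs_sub_comm y]; exact hl x y
  _ = K * |y - x| := rfl

/-- Monotonicity of slopes of convex functions, with the base point allowed on either side. -/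
theorem slope_mono_of_ne (hc : ConvexOn ℝ univ ψ) {x s t : ℝ} (hs : s ≠ x) (ht : t ≠ x)
    (hst : s ≤ t) : slope ψ x s ≤ slope ψ x t := by
  have := hc.secant_mono (a := x) (x := s) (y := t) trivial trivial trivial hs ht hst
  simpa [slope_def_field] using this

theorem bddBelow_slopes (hl : ∀ x y, |ψ x - ψ y| ≤ K * |x - y|) (x : ℝ) :
    BddBelow (slope ψ x '' Ioi x) := by
  refine ⟨-K, ?_⟩
  rintro w ⟨t, ht, rfl⟩
  exact neg_le_of_abs_le (slope_abs_le hl (ne_of_lt ht))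

theorem rd_le_slope (hl : ∀ x y, |ψ x - ψ y| ≤ K * |x - y|) {x t : ℝ} (h : x < t) :
    rd ψ x ≤ slope ψ x t :=
  csInf_le (bddBelow_slopes hl x) ⟨t, h, rfl⟩

theorem slope_le_rd (hc : ConvexOn ℝ univ ψ) {x s : ℝ} (h : s < x) :
    slope ψ x s ≤ rd ψ x := by
  refine le_csInf ⟨slope ψ x (x + 1), ⟨x + 1, by simp, rfl⟩⟩ ?_
  rintro w ⟨t, ht, rfl⟩
  exact slope_mono_of_ne hc (ne_of_lt h) (ne_of_gt ht) (le_of_lt (h.trans ht))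

theorem abs_rd_le (hc : ConvexOn ℝ univ ψ) (hl : ∀ x y, |ψ x - ψ y| ≤ K * |x - y|) (x : ℝ) :
    |rd ψ x| ≤ K := by
  rw [abs_le]
  constructor
  · have h1 : slope ψ x (x - 1) ≤ rd ψ x := slope_le_rd hc (by linarith)
    have h2 : -K ≤ slope ψ x (x - 1) := neg_le_of_abs_le (slope_abs_le hl (by intro h; linarith [h.symm ▸ (rfl : x = x)]))
    linarith
  · have h1 : rd ψ x ≤ slope ψ x (x + 1) := rd_le_slope hl (by linarith)
    have h2 : slope ψ x (x + 1) ≤ K := le_of_abs_le (slope_abs_le hl (by intro h; linarith [h.symm ▸ (rfl : x = x)]))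
    linarith

theorem rd_mono (hc : ConvexOn ℝ univ ψ) (hl : ∀ x y, |ψ x - ψ y| ≤ K * |x - y|)
    {x y : ℝ} (h : x < y) : rd ψ x ≤ rd ψ y := by
  calc rd ψ x ≤ slope ψ x y := rd_le_slope hl h
  _ = slope ψ y x := slope_comm ψ x y
  _ ≤ rd ψ y := slope_le_rd hc h

theorem rd_mono' (hc : ConvexOn ℝ univ ψ) (hl : ∀ x y, |ψ x - ψ y| ≤ K * |x - y|)
    {x y : ℝ} (h : x ≤ y) : rd ψ x ≤ rd ψ y := by
  rcases eq_or_lt_of_le h with rfl | h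
  · exact le_rfl
  · exact rd_mono hc hl h

theorem tendsto_slope_rd (hc : ConvexOn ℝ univ ψ) (hl : ∀ x y, |ψ x - ψ y| ≤ K * |x - y|)
    (x : ℝ) : Tendsto (slope ψ x) (𝓝[>] x) (𝓝 (rd ψ x)) := by
  refine MonotoneOn.tendsto_nhdsGT ?_ (bddBelow_slopes hl x)
  intro s hs t ht hst
  exact slope_mono_of_ne hc (ne_of_gt hs) (ne_of_gt ht) hst

/-- Key rigidity: if two convex functions agree at `x < y` then the right slope of the first
at `x` is at most the right slope of the second at `y`. -/
theorem pair_charge (hc : ConvexOn ℝ univ ψ) (hc' : ConvexOn ℝ univ ψ')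
    (hl : ∀ x y, |ψ x - ψ y| ≤ K * |x - y|)
    {x y : ℝ} (hxy : x < y) (ex : ψ x = ψ' x) (ey : ψ y = ψ' y) :
    rd ψ x ≤ rd ψ' y := by
  calc rd ψ x ≤ slope ψ x y := rd_le_slope hl hxy
  _ = slope ψ' y x := by
        rw [slope_def_field, slope_def_field, ex, ey]
        rw [div_eq_div_iff (sub_ne_zero.2 (ne_of_gt hxy)) (sub_ne_zero.2 (ne_of_lt hxy))]
        ring
  _ ≤ rd ψ' y := slope_le_rd hc' hxy

theorem pair_abs (hc : ConvexOn ℝ univ ψ) (hc' : ConvexOn ℝ univ ψ')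
    (hl : ∀ x y, |ψ x - ψ y| ≤ K * |x - y|) (hl' : ∀ x y, |ψ' x - ψ' y| ≤ K * |x - y|)
    {x y : ℝ} (hxy : x < y) (ex : ψ x = ψ' x) (ey : ψ y = ψ' y) :
    |rd ψ y - rd ψ' y| ≤ (rd ψ y - rd ψ x) + (rd ψ' y - rd ψ' x) := by
  have h1 : rd ψ x ≤ rd ψ' y := pair_charge hc hc' hl hxy ex ey
  have h2 : rd ψ' x ≤ rd ψ y := pair_charge hc' hc hl' hxy ex.symm ey.symm
  have h3 : rd ψ x ≤ rd ψ y := rd_mono hc hl hxy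
  have h4 : rd ψ' x ≤ rd ψ' y := rd_mono hc' hl' hxy
  rw [abs_sub_le_iff]
  constructor <;> linarith

end ConvexAPI


variable {p : ℕ} {K : ℝ}

section PhiSection

variable (ψ : Fin p → ℝ → ℝ)

/-- Admissible sums of slope-jumps at common points of `ψ i` and `ψ j` up to level `x`. -/
def phiSet (i j : Fin p) (x : ℝ) : Set ℝ :=
  {S | ∃ (n : ℕ) (ξ : Fin n → ℝ), StrictMono ξ ∧ (∀ r, ξ r ≤ x) ∧
        (∀ r, ψ i (ξ r) = ψ j (ξ r)) ∧
        S = ∑ r, |rd (ψ i) (ξ r) - rd (ψ j) (ξ r)|}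

def Phi (i j : Fin p) (x : ℝ) : ℝ := sSup (phiSet ψ i j x)

variable {ψ}
variable (hc : ∀ i, ConvexOn ℝ univ (ψ i))
  (hl : ∀ (i : Fin p) (x y : ℝ), |ψ i x - ψ i y| ≤ K * |x - y|)

include hc hl

/-- Strengthened induction bound for jump sums. -/
theorem jump_sum_aux (i j : Fin p) : ∀ (n : ℕ) (ξ : Fin (n + 1) → ℝ), StrictMono ξ →
    (∀ r, ψ i (ξ r) = ψ j (ξ r)) →
    ∑ r, |rd (ψ i) (ξ r) - rd (ψ j) (ξ r)| ≤
      2 * K + (rd (ψ i) (ξ (Fin.last n)) - rd (ψ i) (ξ 0))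
            + (rd (ψ j) (ξ (Fin.last n)) - rd (ψ j) (ξ 0)) := by
  intro n
  induction n with
  | zero =>
    intro ξ hmono hzero
    have h1 : |rd (ψ i) (ξ 0)| ≤ K := abs_rd_le (hc i) (hl i) _
    have h2 : |rd (ψ j) (ξ 0)| ≤ K := abs_rd_le (hc j) (hl j) _
    have : (Fin.last 0) = (0 : Fin 1) := rfl
    rw [Fin.sum_univ_one, this]
    have := abs_sub (rd (ψ i) (ξ 0)) (rd (ψ j) (ξ 0))
    have habs : |rd (ψ i) (ξ 0) - rd (ψ j) (ξ 0)| ≤ |rd (ψ i) (ξ 0)| + |rd (ψ j) (ξ 0)| :=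
      abs_sub _ _
    linarith
  | succ m IH =>
    intro ξ hmono hzero
    set ξ' : Fin (m + 1) → ℝ := fun r => ξ r.castSucc with hξ'
    have hmono' : StrictMono ξ' := fun a b hab => hmono (by simpa using hab)
    have hzero' : ∀ r, ψ i (ξ' r) = ψ j (ξ' r) := fun r => hzero _
    have hIH := IH ξ' hmono' hzero'
    rw [Fin.sum_univ_castSucc]
    have hpen : ξ' (Fin.last m) = ξ (Fin.last m).castSucc := rfl
    have hlt : ξ ((Fin.last m).castSucc) < ξ (Fin.last (m + 1)) := by
      apply hmono
      rw [Fin.lt_iff_val_lt_val]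
      simp
    have hkey := pair_abs (hc i) (hc j) (hl i) (hl j) hlt (hzero _) (hzero _)
    have h0 : ξ' 0 = ξ 0 := rfl
    rw [h0, hpen] at hIH
    linarith
  
theorem jump_sum_le (i j : Fin p) (n : ℕ) (ξ : Fin n → ℝ) (hmono : StrictMono ξ)
    (hzero : ∀ r, ψ i (ξ r) = ψ j (ξ r)) (hK : 0 ≤ K) :
    ∑ r, |rd (ψ i) (ξ r) - rd (ψ j) (ξ r)| ≤ 6 * K := by
  cases n with
  | zero => simp; linarith
  | succ m =>
    have := jump_sum_aux hc hl i j m ξ hmono hzero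
    have b1 : |rd (ψ i) (ξ (Fin.last m))| ≤ K := abs_rd_le (hc i) (hl i) _
    have b2 : |rd (ψ i) (ξ 0)| ≤ K := abs_rd_le (hc i) (hl i) _
    have b3 : |rd (ψ j) (ξ (Fin.last m))| ≤ K := abs_rd_le (hc j) (hl j) _
    have b4 : |rd (ψ j) (ξ 0)| ≤ K := abs_rd_le (hc j) (hl j) _
    rw [abs_le] at b1 b2 b3 b4
    linarith

omit hc hl in
theorem phiSet_nonempty (i j : Fin p) (x : ℝ) : (phiSet ψ i j x).Nonempty := by
  refine ⟨0, 0, Fin.elim0, fun a => a.elim0, fun r => r.elim0, fun r => r.elim0, by simp⟩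

theorem phiSet_bddAbove (hK : 0 ≤ K) (i j : Fin p) (x : ℝ) : BddAbove (phiSet ψ i j x) := by
  refine ⟨6 * K, ?_⟩
  rintro S ⟨n, ξ, hmono, hle, hzero, rfl⟩
  exact jump_sum_le hc hl i j n ξ hmono hzero hK

theorem Phi_nonneg (hK : 0 ≤ K) (i j : Fin p) (x : ℝ) : 0 ≤ Phi ψ i j x :=
  le_csSup (phiSet_bddAbove hc hl hK i j x)
    ⟨0, Fin.elim0, fun a => a.elim0, fun r => r.elim0, fun r => r.elim0, by simp⟩

theorem Phi_le (hK : 0 ≤ K) (i j : Fin p) (x : ℝ) : Phi ψ i j x ≤ 6 * K := by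
  refine csSup_le (phiSet_nonempty i j x) ?_
  rintro S ⟨n, ξ, hmono, hle, hzero, rfl⟩
  exact jump_sum_le hc hl i j n ξ hmono hzero hK

theorem Phi_mono (hK : 0 ≤ K) (i j : Fin p) {x y : ℝ} (hxy : x ≤ y) :
    Phi ψ i j x ≤ Phi ψ i j y := by
  refine csSup_le_csSup (phiSet_bddAbove hc hl hK i j y) (phiSet_nonempty i j x) ?_
  rintro S ⟨n, ξ, hmono, hle, hzero, rfl⟩
  exact ⟨n, ξ, hmono, fun r => (hle r).trans hxy, hzero, rfl⟩

/-- Appending one new common point strictly above `x` and at most `y`. -/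
theorem Phi_append (hK : 0 ≤ K) (i j : Fin p) {x y ξ₀ : ℝ} (h1 : x < ξ₀) (h2 : ξ₀ ≤ y)
    (hz : ψ i ξ₀ = ψ j ξ₀) :
    Phi ψ i j x + |rd (ψ i) ξ₀ - rd (ψ j) ξ₀| ≤ Phi ψ i j y := by
  rw [← sub_nonneg]
  have key : ∀ S ∈ phiSet ψ i j x, S ≤ Phi ψ i j y - |rd (ψ i) ξ₀ - rd (ψ j) ξ₀| := by
    rintro S ⟨n, ξ, hmono, hle, hzero, rfl⟩
    rw [le_sub_iff_add_le]
    have mem : (∑ r, |rd (ψ i) (ξ r) - rd (ψ j) (ξ r)|) + |rd (ψ i) ξ₀ - rd (ψ j) ξ₀|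
        ∈ phiSet ψ i j y := by
      refine ⟨n + 1, Fin.snoc ξ ξ₀, ?_, ?_, ?_, ?_⟩
      · intro a b hab
        rcases Fin.eq_castSucc_or_eq_last b with ⟨b', rfl⟩ | rfl
        · have ha' : a < Fin.last n := lt_of_lt_of_le hab b'.castSucc_lt_last.le
          rcases Fin.eq_castSucc_or_eq_last a with ⟨a', rfl⟩ | rfl
          · rw [Fin.snoc_castSucc, Fin.snoc_castSucc]
            exact hmono (by exact_mod_cast hab)
          · exact absurd ha' (lt_irrefl _)
        · rcases Fin.eq_castSucc_or_eq_last a with ⟨a', rfl⟩ | rfl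
          · rw [Fin.snoc_castSucc, Fin.snoc_last]
            exact lt_of_le_of_lt (hle a') h1
          · exact absurd hab (lt_irrefl _)
      · intro r
        rcases Fin.eq_castSucc_or_eq_last r with ⟨r', rfl⟩ | rfl
        · rw [Fin.snoc_castSucc]; exact (hle r').trans (h1.le.trans h2)
        · rw [Fin.snoc_last]; exact h2
      · intro r
        rcases Fin.eq_castSucc_or_eq_last r with ⟨r', rfl⟩ | rfl
        · rw [Fin.snoc_castSucc]; exact hzero r'
        · rw [Fin.snoc_last]; exact hz
      · rw [Fin.sum_univ_castSucc]
        simp [Fin.snoc_castSucc, Fin.snoc_last]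
    exact le_csSup (phiSet_bddAbove hc hl hK i j y) mem
  have h3 : Phi ψ i j x ≤ Phi ψ i j y - |rd (ψ i) ξ₀ - rd (ψ j) ξ₀| :=
    csSup_le (phiSet_nonempty i j x) key
  linarith

end PhiSection


theorem filter_pigeonhole {ι β : Type*} [Finite ι] {l : Filter β} [hne : l.NeBot]
    {A : ι → Set β} (h : ∀ᶠ t in l, ∃ i, t ∈ A i) : ∃ i, (l ⊓ 𝓟 (A i)).NeBot := by
  by_contra hno
  push_neg at hno
  have hc : ∀ i, (A i)ᶜ ∈ l := by
    intro i
    have h1 := hno i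
    exact Filter.inf_principal_eq_bot.1 h1
  have h2 : ∀ᶠ t in l, ∀ i, t ∈ (A i)ᶜ := Filter.eventually_all.2 hc
  obtain ⟨t, ⟨i, hi⟩, hni⟩ := (h.and h2).exists
  exact hni i hi

section Core

variable {α K : ℝ} {p : ℕ} {ψ : Fin p → ℝ → ℝ} {f : ℝ → ℝ}

/-- The filter of right-approach to `x` through contact points of branch `i`. -/
def lif (α : ℝ) (ψ : Fin p → ℝ → ℝ) (f : ℝ → ℝ) (i : Fin p) (x : ℝ) : Filter ℝ :=
  𝓝[>] x ⊓ 𝓟 (Ioo 0 α ∩ {t | f t = ψ i t})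

theorem lif_le_nhdsGT (i : Fin p) (x : ℝ) : lif α ψ f i x ≤ 𝓝[>] x := inf_le_left

theorem ev_Ioo (hα : 0 < α) {x : ℝ} (hx : x ∈ Ico 0 α) :
    ∀ᶠ t in 𝓝[>] x, t ∈ Ioo 0 α := by
  have h1 : Ioo x α ∈ 𝓝[>] x := Ioo_mem_nhdsGT_of_mem ⟨le_rfl, hx.2⟩
  filter_upwards [h1] with t ht
  exact ⟨lt_of_le_of_lt hx.1 ht.1, ht.2⟩

theorem exists_rc (hα : 0 < α) (hsel : ∀ x ∈ Ioo 0 α, ∃ i, f x = ψ i x)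
    {x : ℝ} (hx : x ∈ Ico 0 α) : ∃ i, (lif α ψ f i x).NeBot := by
  have h : ∀ᶠ t in 𝓝[>] x, ∃ i, t ∈ Ioo 0 α ∩ {t | f t = ψ i t} := by
    filter_upwards [ev_Ioo hα hx] with t ht
    obtain ⟨i, hi⟩ := hsel t ht
    exact ⟨i, ht, hi⟩
  exact filter_pigeonhole h

theorem contact_of_rc (hψcont : ∀ i, Continuous (ψ i)) (hf : ContinuousOn f (Icc 0 α))
    {x : ℝ} (hx : x ∈ Icc 0 α) {i : Fin p} (hne : (lif α ψ f i x).NeBot) :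
    f x = ψ i x := by
  have hle1 : lif α ψ f i x ≤ 𝓝[Icc 0 α] x := by
    rw [nhdsWithin]
    refine le_inf (inf_le_left.trans nhdsWithin_le_nhds) (inf_le_right.trans ?_)
    exact principal_mono.2 fun t ht => Ioo_subset_Icc_self ht.1
  have t1 : Tendsto f (lif α ψ f i x) (𝓝 (f x)) :=
    (hf.continuousWithinAt hx).mono_left hle1
  have t2 : Tendsto (ψ i) (lif α ψ f i x) (𝓝 (ψ i x)) :=
    ((hψcont i).tendsto x).mono_left (inf_le_left.trans nhdsWithin_le_nhds)
  have heq : f =ᶠ[lif α ψ f i x] ψ i := by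
    have : Ioo 0 α ∩ {t | f t = ψ i t} ∈ lif α ψ f i x :=
      mem_inf_of_right (mem_principal_self _)
    filter_upwards [this] with t ht using ht.2
  exact tendsto_nhds_unique (t1.congr' heq) t2

theorem tendsto_slope_contact (hc : ∀ i, ConvexOn ℝ univ (ψ i))
    (hl : ∀ (i : Fin p) (x y : ℝ), |ψ i x - ψ i y| ≤ K * |x - y|)
    (hψcont : ∀ i, Continuous (ψ i)) (hf : ContinuousOn f (Icc 0 α))
    {x : ℝ} (hx : x ∈ Icc 0 α) {i : Fin p} (hne : (lif α ψ f i x).NeBot) :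
    Tendsto (slope f x) (lif α ψ f i x) (𝓝 (rd (ψ i) x)) := by
  have hfx := contact_of_rc hψcont hf hx hne
  have h1 : Tendsto (slope (ψ i) x) (lif α ψ f i x) (𝓝 (rd (ψ i) x)) :=
    (tendsto_slope_rd (hc i) (hl i) x).mono_left (lif_le_nhdsGT i x)
  refine (h1.congr' ?_).mono_left le_rfl
  have : Ioo 0 α ∩ {t | f t = ψ i t} ∈ lif α ψ f i x :=
    mem_inf_of_right (mem_principal_self _)
  filter_upwards [this] with t ht
  rw [slope_def_field, slope_def_field, ht.2, hfx]

theorem freq_slope_eq (hα : 0 < α) (hf : ContinuousOn f (Icc 0 α))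
    {x : ℝ} (hx : x ∈ Ico 0 α) {c : ℝ}
    (h1 : ∃ᶠ t in 𝓝[>] x, slope f x t < c) (h2 : ∃ᶠ t in 𝓝[>] x, c < slope f x t) :
    ∃ᶠ t in 𝓝[>] x, slope f x t = c := by
  rw [Filter.frequently_iff]
  intro U hU
  obtain ⟨u, hu, hsub⟩ := mem_nhdsGT_iff_exists_Ioo_subset.1 hU
  set u' := min u α with hu'
  have hxu' : x < u' := lt_min hu hx.2
  have hV : Ioo x u' ∈ 𝓝[>] x := Ioo_mem_nhdsGT_of_mem ⟨le_rfl, hxu'⟩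
  obtain ⟨t₁, ht₁, ht₁V⟩ := (h1.and_eventually (Filter.eventually_mem_set.2 hV)).exists
  obtain ⟨t₂, ht₂, ht₂V⟩ := (h2.and_eventually (Filter.eventually_mem_set.2 hV)).exists
  have hIccsub : uIcc t₁ t₂ ⊆ Ioo x u' := by
    rw [uIcc_eq_union]
    rintro t (ht | ht)
    · exact ⟨lt_of_lt_of_le ht₁V.1 ht.1, lt_of_le_of_lt ht.2 ht₂V.2⟩
    · exact ⟨lt_of_lt_of_le ht₂V.1 ht.1, lt_of_le_of_lt ht.2 ht₁V.2⟩
  have hsub2 : Ioo x u' ⊆ Icc 0 α := fun t ht =>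
    ⟨hx.1.trans ht.1.le, ht.2.le.trans (min_le_right u α)⟩
  set g' : ℝ → ℝ := fun t => (f t - f x) / (t - x) with hg'
  have hcont : ContinuousOn g' (uIcc t₁ t₂) := by
    apply ContinuousOn.div
    · exact (hf.mono (hIccsub.trans hsub2)).sub continuousOn_const
    · exact (continuousOn_id.sub continuousOn_const)
    · intro t ht
      exact sub_ne_zero.2 (ne_of_gt (hIccsub ht).1)
  have hslope : ∀ t, slope f x t = g' t := fun t => slope_def_field f x t
  have hcmem : c ∈ uIcc (g' t₁) (g' t₂) := by
    rw [← hslope, ← hslope]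
    exact mem_uIcc.2 (Or.inl ⟨(le_of_lt ht₁), le_of_lt ht₂⟩)
  obtain ⟨t₃, ht₃mem, ht₃⟩ := intermediate_value_uIcc hcont hcmem
  refine ⟨t₃, hsub ?_, by rw [hslope]; exact ht₃⟩
  have := hIccsub ht₃mem
  exact ⟨this.1, lt_of_lt_of_le this.2 (min_le_left u α)⟩

theorem exists_rightDeriv (hα : 0 < α) (hc : ∀ i, ConvexOn ℝ univ (ψ i))
    (hl : ∀ (i : Fin p) (x y : ℝ), |ψ i x - ψ i y| ≤ K * |x - y|)
    (hψcont : ∀ i, Continuous (ψ i)) (hf : ContinuousOn f (Icc 0 α))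
    (hsel : ∀ x ∈ Ioo 0 α, ∃ i, f x = ψ i x)
    {x : ℝ} (hx : x ∈ Ico 0 α) : ∃ v : ℝ,
      Tendsto (slope f x) (𝓝[>] x) (𝓝 v) ∧
      (∀ i, (lif α ψ f i x).NeBot → rd (ψ i) x = v) ∧
      ∃ i, (lif α ψ f i x).NeBot ∧ rd (ψ i) x = v := by
  classical
  have hxIcc : x ∈ Icc 0 α := ⟨hx.1, hx.2.le⟩
  set W : Finset ℝ :=
    (Finset.univ.filter fun i => (lif α ψ f i x).NeBot).image (fun i => rd (ψ i) x) with hW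
  have hWne : W.Nonempty := by
    obtain ⟨i, hi⟩ := exists_rc hα hsel hx
    exact ⟨rd (ψ i) x, Finset.mem_image.2 ⟨i, Finset.mem_filter.2 ⟨Finset.mem_univ i, hi⟩, rfl⟩⟩
  have hevIoo : ∀ᶠ t in 𝓝[>] x, ∃ i, t ∈ Ioo 0 α ∩ {t | f t = ψ i t} := by
    filter_upwards [ev_Ioo hα hx] with t ht
    obtain ⟨i, hi⟩ := hsel t ht; exact ⟨i, ht, hi⟩
  have main : ∀ c : ℝ, (∃ᶠ t in 𝓝[>] x, slope f x t < c) →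
      (∃ᶠ t in 𝓝[>] x, c < slope f x t) → c ∈ W := by
    intro c hfreq1 hfreq2
    have freq3 := freq_slope_eq hα hf hx hfreq1 hfreq2
    haveI hlc : (𝓝[>] x ⊓ 𝓟 {t | slope f x t = c}).NeBot := frequently_iff_neBot.1 freq3
    have hev : ∀ᶠ t in 𝓝[>] x ⊓ 𝓟 {t | slope f x t = c},
        ∃ i, t ∈ Ioo 0 α ∩ {t | f t = ψ i t} := hevIoo.filter_mono inf_le_left
    obtain ⟨i, hi⟩ := filter_pigeonhole hev
    haveI := hi
    have hle : (𝓝[>] x ⊓ 𝓟 {t | slope f x t = c}) ⊓ 𝓟 (Ioo 0 α ∩ {t | f t = ψ i t}) ≤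
        lif α ψ f i x := by
      unfold lif; exact inf_le_inf_right _ inf_le_left
    haveI hlif : (lif α ψ f i x).NeBot := hi.mono hle
    have t1 : Tendsto (slope f x)
        ((𝓝[>] x ⊓ 𝓟 {t | slope f x t = c}) ⊓ 𝓟 (Ioo 0 α ∩ {t | f t = ψ i t}))
        (𝓝 (rd (ψ i) x)) :=
      (tendsto_slope_contact hc hl hψcont hf hxIcc hlif).mono_left hle
    have t2 : Tendsto (slope f x)
        ((𝓝[>] x ⊓ 𝓟 {t | slope f x t = c}) ⊓ 𝓟 (Ioo 0 α ∩ {t | f t = ψ i t}))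
        (𝓝 c) := by
      have hmem : {t | slope f x t = c} ∈
          (𝓝[>] x ⊓ 𝓟 {t | slope f x t = c}) ⊓ 𝓟 (Ioo 0 α ∩ {t | f t = ψ i t}) :=
        mem_inf_of_left (mem_inf_of_right (mem_principal_self _))
      refine Tendsto.congr' ?_ tendsto_const_nhds
      filter_upwards [hmem] with t ht using ht.symm
    have hrdc : rd (ψ i) x = c := tendsto_nhds_unique t1 t2
    rw [← hrdc]
    exact Finset.mem_image.2 ⟨i, Finset.mem_filter.2 ⟨Finset.mem_univ i, hlif⟩, rfl⟩
  have hone : ∀ w ∈ W, w = W.min' hWne := by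
    by_contra hcon
    push_neg at hcon
    obtain ⟨w, hwW, hwne⟩ := hcon
    have hwgt : W.min' hWne < w := lt_of_le_of_ne (W.min'_le w hwW) (Ne.symm hwne)
    set W' := W.filter (fun z => W.min' hWne < z) with hW'
    have hW'ne : W'.Nonempty := ⟨w, Finset.mem_filter.2 ⟨hwW, hwgt⟩⟩
    set a := W.min' hWne with ha
    set b := W'.min' hW'ne with hb
    have hbW : b ∈ W := (Finset.mem_filter.1 (W'.min'_mem hW'ne)).1
    have hab : a < b := (Finset.mem_filter.1 (W'.min'_mem hW'ne)).2
    set c := (a + b) / 2 with hcdef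
    have hac : a < c := by rw [hcdef]; linarith
    have hcb : c < b := by rw [hcdef]; linarith
    have hcW : c ∉ W := by
      intro hcWmem
      rcases le_or_gt c a with h | h
      · linarith
      · have hmem' : c ∈ W' := Finset.mem_filter.2 ⟨hcWmem, h⟩
        have := W'.min'_le c hmem'
        linarith
    obtain ⟨ia, hiamem, hia⟩ := Finset.mem_image.1 (W.min'_mem hWne)
    obtain ⟨ib, hibmem, hib⟩ := Finset.mem_image.1 hbW
    have hnea : (lif α ψ f ia x).NeBot := (Finset.mem_filter.1 hiamem).2
    have hneb : (lif α ψ f ib x).NeBot := (Finset.mem_filter.1 hibmem).2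
    haveI := hnea; haveI := hneb
    have ta := tendsto_slope_contact hc hl hψcont hf hxIcc hnea
    have tb := tendsto_slope_contact hc hl hψcont hf hxIcc hneb
    have hfra : ∃ᶠ t in 𝓝[>] x, slope f x t < c := by
      have hev' : ∀ᶠ t in lif α ψ f ia x, slope f x t < c :=
        ta (Iio_mem_nhds (by rw [hia]; exact hac))
      exact hev'.frequently.filter_mono (lif_le_nhdsGT ia x)
    have hfrb : ∃ᶠ t in 𝓝[>] x, c < slope f x t := by
      have hev' : ∀ᶠ t in lif α ψ f ib x, c < slope f x t :=
        tb (Ioi_mem_nhds (by rw [hib]; exact hcb))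
      exact hev'.frequently.filter_mono (lif_le_nhdsGT ib x)
    exact hcW (main c hfra hfrb)
  set v := W.min' hWne with hv
  have hval : ∀ i, (lif α ψ f i x).NeBot → rd (ψ i) x = v := fun i hi =>
    hone _ (Finset.mem_image.2 ⟨i, Finset.mem_filter.2 ⟨Finset.mem_univ i, hi⟩, rfl⟩)
  refine ⟨v, ?_, hval, ?_⟩
  · rw [Metric.tendsto_nhds]
    intro ε hε
    by_contra hev
    have hfreq : ∃ᶠ t in 𝓝[>] x, ¬ dist (slope f x t) v < ε := Filter.not_eventually.1 hev
    haveI hbad : (𝓝[>] x ⊓ 𝓟 {t | ¬ dist (slope f x t) v < ε}).NeBot :=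
      frequently_iff_neBot.1 hfreq
    have hev2 : ∀ᶠ t in 𝓝[>] x ⊓ 𝓟 {t | ¬ dist (slope f x t) v < ε},
        ∃ i, t ∈ Ioo 0 α ∩ {t | f t = ψ i t} := hevIoo.filter_mono inf_le_left
    obtain ⟨i, hi⟩ := filter_pigeonhole hev2
    haveI := hi
    have hle : (𝓝[>] x ⊓ 𝓟 {t | ¬ dist (slope f x t) v < ε}) ⊓
        𝓟 (Ioo 0 α ∩ {t | f t = ψ i t}) ≤ lif α ψ f i x := by
      unfold lif; exact inf_le_inf_right _ inf_le_left
    haveI hlif : (lif α ψ f i x).NeBot := hi.mono hle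
    have t1 : Tendsto (slope f x)
        ((𝓝[>] x ⊓ 𝓟 {t | ¬ dist (slope f x t) v < ε}) ⊓ 𝓟 (Ioo 0 α ∩ {t | f t = ψ i t}))
        (𝓝 v) := by
      have t0 := (tendsto_slope_contact hc hl hψcont hf hxIcc hlif).mono_left hle
      rw [hval i hlif] at t0
      exact t0
    have hgood : ∀ᶠ t in (𝓝[>] x ⊓ 𝓟 {t | ¬ dist (slope f x t) v < ε}) ⊓
        𝓟 (Ioo 0 α ∩ {t | f t = ψ i t}), dist (slope f x t) v < ε :=
      Metric.tendsto_nhds.1 t1 ε hε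
    have hbadall : ∀ᶠ t in (𝓝[>] x ⊓ 𝓟 {t | ¬ dist (slope f x t) v < ε}) ⊓
        𝓟 (Ioo 0 α ∩ {t | f t = ψ i t}), ¬ dist (slope f x t) v < ε := by
      have hmem : {t | ¬ dist (slope f x t) v < ε} ∈
          (𝓝[>] x ⊓ 𝓟 {t | ¬ dist (slope f x t) v < ε}) ⊓
            𝓟 (Ioo 0 α ∩ {t | f t = ψ i t}) :=
        mem_inf_of_left (mem_inf_of_right (mem_principal_self _))
      filter_upwards [hmem] with t ht using ht
    obtain ⟨t, h1, h2⟩ := (hgood.and hbadall).exists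
    exact h2 h1
  · obtain ⟨i0, hi0⟩ := exists_rc hα hsel hx
    exact ⟨i0, hi0, hval i0 hi0⟩

/-- Contact of branch `k` at point `t`. -/
def Ct (α : ℝ) (ψ : Fin p → ℝ → ℝ) (f : ℝ → ℝ) (k : Fin p) (t : ℝ) : Prop :=
  t ∈ Icc 0 α ∧ f t = ψ k t

/-- A chain of branches from `(i, u)` to `(k, t)` through ordered transition points. -/
structure IsChain (α : ℝ) (ψ : Fin p → ℝ → ℝ) (f : ℝ → ℝ) (i : Fin p) (u : ℝ)
    (n : ℕ) (ks : ℕ → Fin p) (ts : ℕ → ℝ) (k : Fin p) (t : ℝ) : Prop where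
  first : ks 0 = i
  lastb : ks n = k
  startle : u ≤ t
  tr : ∀ r < n, u ≤ ts r ∧ ts r ≤ t ∧ Ct α ψ f (ks r) (ts r) ∧ Ct α ψ f (ks (r+1)) (ts r)
  mono : ∀ q r, q ≤ r → r < n → ts q ≤ ts r
  ct : Ct α ψ f k t

def Reach (α : ℝ) (ψ : Fin p → ℝ → ℝ) (f : ℝ → ℝ) (i : Fin p) (u : ℝ) (k : Fin p) (t : ℝ) :
    Prop :=
  ∃ n ks ts, IsChain α ψ f i u n ks ts k t

theorem reach_refl {i : Fin p} {u : ℝ} (hu : Ct α ψ f i u) : Reach α ψ f i u i u :=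
  ⟨0, fun _ => i, fun _ => u, rfl, rfl, le_rfl, fun r hr => absurd hr (Nat.not_lt_zero r),
    fun _ _ _ hr => absurd hr (Nat.not_lt_zero _), hu⟩

theorem reach_switch {i k k' : Fin p} {u t : ℝ} (h : Reach α ψ f i u k t)
    (h' : Ct α ψ f k' t) : Reach α ψ f i u k' t := by
  obtain ⟨n, ks, ts, hch⟩ := h
  refine ⟨n + 1, fun r => if r ≤ n then ks r else k', fun r => if r < n then ts r else t,
    ?_, ?_, hch.startle, ?_, ?_, h'⟩
  · simp only [if_pos (Nat.zero_le n)]; exact hch.first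
  · simp only [if_neg (by omega : ¬ n + 1 ≤ n)]
  · intro r hr
    rcases Nat.lt_or_ge r n with hrn | hrn
    · have hr1 : r + 1 ≤ n := hrn
      simp only [if_pos hrn, if_pos hrn.le, if_pos hr1]
      exact hch.tr r hrn
    · have hrn' : r = n := by omega
      simp only [hrn', if_neg (lt_irrefl n), if_pos (le_refl n), if_neg (by omega : ¬ n + 1 ≤ n)]
      exact ⟨hch.startle, le_rfl, hch.lastb ▸ hch.ct, h'⟩
  · intro q r hqr hr
    rcases Nat.lt_or_ge r n with hrn | hrn
    · have hqn : q < n := lt_of_le_of_lt hqr hrn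
      simp only [if_pos hrn, if_pos hqn]
      exact hch.mono q r hqr hrn
    · have hrn' : r = n := by omega
      rcases Nat.lt_or_ge q n with hqn | hqn
      · simp only [hrn', if_pos hqn, if_neg (lt_irrefl n)]
        exact (hch.tr q hqn).2.1
      · have hq' : q = n := by omega
        simp only [hrn', hq', if_neg (lt_irrefl n), le_refl]

theorem reach_mono_t {i k : Fin p} {u t t' : ℝ} (h : Reach α ψ f i u k t)
    (h' : Ct α ψ f k t') (htt' : t ≤ t') : Reach α ψ f i u k t' := by
  obtain ⟨n, ks, ts, hch⟩ := h
  exact ⟨n, ks, ts, hch.first, hch.lastb, hch.startle.trans htt',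
    fun r hr => ⟨(hch.tr r hr).1, ((hch.tr r hr).2.1).trans htt', (hch.tr r hr).2.2⟩,
    hch.mono, h'⟩

theorem reach_total (hα : 0 < α) (hψcont : ∀ i, Continuous (ψ i))
    (hf : ContinuousOn f (Icc 0 α)) (hsel : ∀ x ∈ Ioo 0 α, ∃ i, f x = ψ i x)
    {i : Fin p} {u v : ℝ} (huv : u ≤ v) (hu : Ct α ψ f i u) (hv : v ∈ Icc 0 α) :
    ∃ k, Reach α ψ f i u k v := by
  classical
  set T := {t | t ∈ Icc u v ∧ ∃ k, Reach α ψ f i u k t} with hT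
  have huT : u ∈ T := ⟨⟨le_rfl, huv⟩, i, reach_refl hu⟩
  have hTne : T.Nonempty := ⟨u, huT⟩
  have hTbdd : BddAbove T := ⟨v, fun t ht => ht.1.2⟩
  set t₀ := sSup T with ht₀def
  have ht₀mem : t₀ ∈ Icc u v := ⟨le_csSup hTbdd huT, csSup_le hTne fun t ht => ht.1.2⟩
  have ht₀Icc : t₀ ∈ Icc 0 α := ⟨hu.1.1.trans ht₀mem.1, ht₀mem.2.trans hv.2⟩
  have hreach : ∃ k, Reach α ψ f i u k t₀ := by
    have hcl : t₀ ∈ closure T := csSup_mem_closure hTne hTbdd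
    haveI hne1 : (𝓝 t₀ ⊓ 𝓟 T).NeBot := mem_closure_iff_clusterPt.1 hcl
    have hev : ∀ᶠ t in 𝓝 t₀ ⊓ 𝓟 T,
        ∃ k, t ∈ {t | t ∈ T ∧ Reach α ψ f i u k t} := by
      have hmem : T ∈ 𝓝 t₀ ⊓ 𝓟 T := mem_inf_of_right (mem_principal_self _)
      filter_upwards [hmem] with t ht
      obtain ⟨k, hk⟩ := ht.2
      exact ⟨k, ht, hk⟩
    obtain ⟨k, hk⟩ := filter_pigeonhole hev
    haveI := hk
    have hsub : {t | t ∈ T ∧ Reach α ψ f i u k t} ⊆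
        Icc 0 α ∩ (fun t => f t - ψ k t) ⁻¹' {0} := by
      rintro t ⟨htT, hrk⟩
      obtain ⟨n, ks, ts, hch⟩ := hrk
      exact ⟨hch.ct.1, by simp [hch.ct.2]⟩
    have hclosed : IsClosed (Icc 0 α ∩ (fun t => f t - ψ k t) ⁻¹' {0}) :=
      (hf.sub (hψcont k).continuousOn).preimage_isClosed_of_isClosed isClosed_Icc
        isClosed_singleton
    have hclosure : t₀ ∈ closure {t | t ∈ T ∧ Reach α ψ f i u k t} := by
      rw [mem_closure_iff_clusterPt]
      exact hk.mono (le_inf (inf_le_left.trans inf_le_left) inf_le_right)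
    have ht₀ct : t₀ ∈ Icc 0 α ∩ (fun t => f t - ψ k t) ⁻¹' {0} :=
      closure_minimal hsub hclosed hclosure
    obtain ⟨t₁, ht₁⟩ : ∃ t₁, t₁ ∈ T ∧ Reach α ψ f i u k t₁ := by
      have hmem : {t | t ∈ T ∧ Reach α ψ f i u k t} ∈
          (𝓝 t₀ ⊓ 𝓟 T) ⊓ 𝓟 {t | t ∈ T ∧ Reach α ψ f i u k t} :=
        mem_inf_of_right (mem_principal_self _)
      exact Filter.nonempty_of_mem hmem
    have hct₀ : Ct α ψ f k t₀ := ⟨ht₀ct.1, sub_eq_zero.1 ht₀ct.2⟩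
    exact ⟨k, reach_mono_t ht₁.2 hct₀ (le_csSup hTbdd ht₁.1)⟩
  rcases eq_or_lt_of_le ht₀mem.2 with heq | hlt
  · obtain ⟨k, hk⟩ := hreach; exact ⟨k, heq ▸ hk⟩
  · exfalso
    have ht₀Ico : t₀ ∈ Ico 0 α := ⟨ht₀Icc.1, lt_of_lt_of_le hlt hv.2⟩
    obtain ⟨k', hk'⟩ := exists_rc hα hsel ht₀Ico
    haveI := hk'
    have hctk' : Ct α ψ f k' t₀ := ⟨ht₀Icc, contact_of_rc hψcont hf ht₀Icc hk'⟩
    obtain ⟨k, hk⟩ := hreach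
    have hreach' : Reach α ψ f i u k' t₀ := reach_switch hk hctk'
    have hmem1 : Ioo 0 α ∩ {s | f s = ψ k' s} ∈ lif α ψ f k' t₀ :=
      mem_inf_of_right (mem_principal_self _)
    have hmem2 : Iio v ∈ lif α ψ f k' t₀ :=
      mem_inf_of_left (nhdsWithin_le_nhds (Iio_mem_nhds hlt))
    have hmem3 : Ioi t₀ ∈ lif α ψ f k' t₀ := mem_inf_of_left self_mem_nhdsWithin
    obtain ⟨t', ht'1, ht'2, ht'3⟩ :=
      ((Filter.eventually_iff.2 hmem1).and
        ((Filter.eventually_iff.2 hmem2).and (Filter.eventually_iff.2 hmem3))).exists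
    have hct' : Ct α ψ f k' t' := ⟨Ioo_subset_Icc_self ht'1.1, ht'1.2⟩
    have ht'T : t' ∈ T :=
      ⟨⟨ht₀mem.1.trans (le_of_lt ht'3), le_of_lt ht'2⟩, k',
        reach_mono_t hreach' hct' (le_of_lt ht'3)⟩
    have := le_csSup hTbdd ht'T
    have ht'gt : t₀ < t' := ht'3
    linarith

theorem chain_inj {i k : Fin p} {u t : ℝ} (h : Reach α ψ f i u k t) :
    ∃ n ks ts, IsChain α ψ f i u n ks ts k t ∧
      ∀ q r, q ≤ n → r ≤ n → ks q = ks r → q = r := by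
  obtain ⟨n, ks, ts, hch⟩ := h
  induction n using Nat.strong_induction_on generalizing ks ts with
  | _ n IH =>
    by_cases hinj : ∀ q r, q ≤ n → r ≤ n → ks q = ks r → q = r
    · exact ⟨n, ks, ts, hch, hinj⟩
    · push_neg at hinj
      obtain ⟨q0, r0, hq0, hr0, heq0, hne0⟩ := hinj
      -- normalize q < r
      obtain ⟨q, r, hq, hr, hqr, heq⟩ : ∃ q r, q ≤ n ∧ r ≤ n ∧ q < r ∧ ks q = ks r := by
        rcases lt_or_gt_of_ne hne0 with h1 | h1
        · exact ⟨q0, r0, hq0, hr0, h1, heq0⟩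
        · exact ⟨r0, q0, hr0, hq0, h1, heq0.symm⟩
      set d := r - q with hd
      have hd1 : 1 ≤ d := by omega
      set n' := n - d with hn'
      have hn'q : q ≤ n' := by omega
      have hn'lt : n' < n := by omega
      set ks' : ℕ → Fin p := fun s => if s ≤ q then ks s else ks (s + d) with hks'
      set ts' : ℕ → ℝ := fun s => if s < q then ts s else ts (s + d) with hts'
      have hch' : IsChain α ψ f i u n' ks' ts' k t := by
        refine ⟨?_, ?_, hch.startle, ?_, ?_, hch.ct⟩
        · simp only [hks', if_pos (Nat.zero_le q)]; exact hch.first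
        · rcases eq_or_lt_of_le hn'q with he | hlt
          · have hrn : r = n := by omega
            simp only [hks', if_pos (le_of_eq he.symm)]
            rw [← he, heq, hrn]
            exact hch.lastb
          · simp only [hks', if_neg (by omega : ¬ n' ≤ q)]
            have : n' + d = n := by omega
            rw [this]; exact hch.lastb
        · intro s hs
          rcases Nat.lt_or_ge s q with hsq | hsq
          · have h1 : s ≤ q := hsq.le
            have h2 : s + 1 ≤ q := hsq
            have hsn : s < n := by omega
            simp only [hks', hts', if_pos hsq, if_pos h1, if_pos h2]
            exact hch.tr s hsn
          · have h1 : ¬ s < q := by omega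
            have h2 : ¬ s + 1 ≤ q := by omega
            have hsdn : s + d < n := by omega
            simp only [hks', hts', if_neg h1, if_neg h2]
            have htr := hch.tr (s + d) hsdn
            rcases eq_or_lt_of_le hsq with he | hlt
            · simp only [if_pos (le_of_eq he.symm)]
              have e1 : ks s = ks (s + d) := by
                rw [← he, heq]; congr 1; omega
              have e2 : s + 1 + d = s + d + 1 := by omega
              rw [e1, e2]
              exact htr
            · simp only [if_neg (by omega : ¬ s ≤ q)]
              have e2 : s + 1 + d = s + d + 1 := by omega
              rw [e2]
              exact htr
        · intro a b hab hb
          simp only [hts']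
          split <;> split <;> exact hch.mono _ _ (by omega) (by omega)
      exact IH n' hn'lt ks' ts' hch'

/-- The global Jordan majorant built from all pairwise jump suprema. -/
def NN (ψ : Fin p → ℝ → ℝ) (z : ℝ) : ℝ :=
  ∑ q : Fin p × Fin p, Phi ψ q.1 q.2 z

theorem NN_mono (hc : ∀ i, ConvexOn ℝ univ (ψ i))
    (hl : ∀ (i : Fin p) (x y : ℝ), |ψ i x - ψ i y| ≤ K * |x - y|) (hK : 0 ≤ K)
    {x y : ℝ} (h : x ≤ y) : NN ψ x ≤ NN ψ y :=
  Finset.sum_le_sum fun q _ => Phi_mono hc hl hK q.1 q.2 h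

theorem NN_nonneg (hc : ∀ i, ConvexOn ℝ univ (ψ i))
    (hl : ∀ (i : Fin p) (x y : ℝ), |ψ i x - ψ i y| ≤ K * |x - y|) (hK : 0 ≤ K)
    (z : ℝ) : 0 ≤ NN ψ z :=
  Finset.sum_nonneg fun q _ => Phi_nonneg hc hl hK q.1 q.2 z

theorem NN_le (hc : ∀ i, ConvexOn ℝ univ (ψ i))
    (hl : ∀ (i : Fin p) (x y : ℝ), |ψ i x - ψ i y| ≤ K * |x - y|) (hK : 0 ≤ K)
    (z : ℝ) : NN ψ z ≤ (p * p : ℝ) * (6 * K) := by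
  have h1 : NN ψ z ≤ ∑ _q : Fin p × Fin p, 6 * K :=
    Finset.sum_le_sum fun q _ => Phi_le hc hl hK q.1 q.2 z
  rw [Finset.sum_const] at h1
  have h2 : (Finset.univ : Finset (Fin p × Fin p)).card = p * p := by
    simp [Finset.card_univ]
  rw [h2] at h1
  calc NN ψ z ≤ (p * p) • (6 * K) := h1
  _ = (p * p : ℝ) * (6 * K) := by rw [nsmul_eq_mul]; push_cast; ring

theorem chain_estimate (hc : ∀ i, ConvexOn ℝ univ (ψ i))
    (hl : ∀ (i : Fin p) (x y : ℝ), |ψ i x - ψ i y| ≤ K * |x - y|) (hK : 0 ≤ K)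
    {i k : Fin p} {u t x y : ℝ} (hxu : x < u) (hty : t ≤ y)
    {n : ℕ} {ks : ℕ → Fin p} {ts : ℕ → ℝ} (hch : IsChain α ψ f i u n ks ts k t)
    (hinj : ∀ q r, q ≤ n → r ≤ n → ks q = ks r → q = r) :
    rd (ψ i) u - rd (ψ k) t ≤ NN ψ y - NN ψ x := by
  classical
  set w : ℕ → ℝ := fun r => if r = 0 then u else ts (r - 1) with hw
  have hwts : ∀ r, r ≤ n → ∀ s, s < n → r ≤ s + 1 → w r ≤ ts s := by
    intro r hr s hs hrs
    cases r with
    | zero => simpa [hw] using (hch.tr s hs).1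
    | succ r' =>
      have : w (r' + 1) = ts r' := by simp [hw]
      rw [this]
      exact hch.mono r' s (by omega) hs
  have hwt : ∀ r, r ≤ n → w r ≤ t := by
    intro r hr
    cases r with
    | zero => simpa [hw] using hch.startle
    | succ r' =>
      have : w (r' + 1) = ts r' := by simp [hw]
      rw [this]
      exact (hch.tr r' (by omega)).2.1
  have main : ∀ r, r ≤ n → rd (ψ i) u ≤ rd (ψ (ks r)) (w r) +
      ∑ s ∈ Finset.range r, |rd (ψ (ks s)) (ts s) - rd (ψ (ks (s+1))) (ts s)| := by
    intro r
    induction r with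
    | zero =>
      intro _
      simp [hw, hch.first]
    | succ r IHr =>
      intro hr
      have hrn : r < n := hr
      have h1 := IHr (by omega)
      have h2 : rd (ψ (ks r)) (w r) ≤ rd (ψ (ks r)) (ts r) :=
        rd_mono' (hc _) (hl _) (hwts r (by omega) r hrn (by omega))
      have h3 : rd (ψ (ks r)) (ts r) ≤ rd (ψ (ks (r+1))) (ts r) +
          |rd (ψ (ks r)) (ts r) - rd (ψ (ks (r+1))) (ts r)| := by
        have := le_abs_self (rd (ψ (ks r)) (ts r) - rd (ψ (ks (r+1))) (ts r))
        linarith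
      have h4 : w (r+1) = ts r := by simp [hw]
      rw [Finset.sum_range_succ, h4]
      linarith
  have hmain := main n le_rfl
  have hlast : rd (ψ (ks n)) (w n) ≤ rd (ψ k) t := by
    rw [hch.lastb]
    exact rd_mono' (hc k) (hl k) (hwt n le_rfl)
  have hsum : ∑ s ∈ Finset.range n, |rd (ψ (ks s)) (ts s) - rd (ψ (ks (s+1))) (ts s)| ≤
      NN ψ y - NN ψ x := by
    have step1 : ∀ s ∈ Finset.range n,
        |rd (ψ (ks s)) (ts s) - rd (ψ (ks (s+1))) (ts s)| ≤
          Phi ψ (ks s) (ks (s+1)) y - Phi ψ (ks s) (ks (s+1)) x := by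
      intro s hs
      rw [Finset.mem_range] at hs
      have htr := hch.tr s hs
      have hz : ψ (ks s) (ts s) = ψ (ks (s+1)) (ts s) := by
        rw [← htr.2.2.1.2, htr.2.2.2.2]
      have := Phi_append hc hl hK (ks s) (ks (s+1)) (lt_of_lt_of_le hxu htr.1)
        (htr.2.1.trans hty) hz
      linarith
    have hinj2 : ∀ a ∈ Finset.range n, ∀ b ∈ Finset.range n,
        (fun s => (ks s, ks (s+1))) a = (fun s => (ks s, ks (s+1))) b → a = b := by
      intro a ha b hb hab
      rw [Finset.mem_range] at ha hb
      simp only [Prod.mk.injEq] at hab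
      exact hinj a b (by omega) (by omega) hab.1
    calc ∑ s ∈ Finset.range n, |rd (ψ (ks s)) (ts s) - rd (ψ (ks (s+1))) (ts s)|
        ≤ ∑ s ∈ Finset.range n,
            (Phi ψ (ks s) (ks (s+1)) y - Phi ψ (ks s) (ks (s+1)) x) :=
          Finset.sum_le_sum step1
      _ = ∑ q ∈ (Finset.range n).image (fun s => (ks s, ks (s+1))),
            (Phi ψ q.1 q.2 y - Phi ψ q.1 q.2 x) :=
          (Finset.sum_image (f := fun q : Fin p × Fin p => Phi ψ q.1 q.2 y - Phi ψ q.1 q.2 x)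
            hinj2).symm
      _ ≤ ∑ q : Fin p × Fin p, (Phi ψ q.1 q.2 y - Phi ψ q.1 q.2 x) := by
          apply Finset.sum_le_sum_of_subset_of_nonneg (Finset.subset_univ _)
          intro q _ _
          have := Phi_mono hc hl hK q.1 q.2 (le_of_lt (hxu.trans_le (hch.startle.trans hty)))
          linarith
      _ = NN ψ y - NN ψ x := by rw [Finset.sum_sub_distrib]; rfl
  linarith

theorem jordan_step (hα : 0 < α) (hc : ∀ i, ConvexOn ℝ univ (ψ i))
    (hl : ∀ (i : Fin p) (x y : ℝ), |ψ i x - ψ i y| ≤ K * |x - y|) (hK : 0 ≤ K)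
    (hψcont : ∀ i, Continuous (ψ i)) (hf : ContinuousOn f (Icc 0 α))
    (hsel : ∀ x ∈ Ioo 0 α, ∃ i, f x = ψ i x)
    {x y : ℝ} (hx : x ∈ Ico 0 α) (hy : y ∈ Ico 0 α) (hxy : x < y)
    {i j : Fin p} (hi : (lif α ψ f i x).NeBot) (hj : (lif α ψ f j y).NeBot) :
    rd (ψ i) x - rd (ψ j) y ≤ NN ψ y - NN ψ x := by
  have hyIcc : y ∈ Icc 0 α := ⟨hy.1, hy.2.le⟩
  have hfy : f y = ψ j y := contact_of_rc hψcont hf hyIcc hj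
  haveI := hi
  have hmem1 : Ioo 0 α ∩ {s | f s = ψ i s} ∈ lif α ψ f i x :=
    mem_inf_of_right (mem_principal_self _)
  have hmem2 : Iio y ∈ lif α ψ f i x := mem_inf_of_left (nhdsWithin_le_nhds (Iio_mem_nhds hxy))
  have hmem3 : Ioi x ∈ lif α ψ f i x := mem_inf_of_left self_mem_nhdsWithin
  obtain ⟨u', h1, h2, h3⟩ :=
    Filter.nonempty_of_mem (Filter.inter_mem hmem1 (Filter.inter_mem hmem2 hmem3))
  have hCti : Ct α ψ f i u' := ⟨Ioo_subset_Icc_self h1.1, h1.2⟩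
  have hCtj : Ct α ψ f j y := ⟨hyIcc, hfy⟩
  obtain ⟨k, hk⟩ := reach_total hα hψcont hf hsel (le_of_lt h2) hCti hyIcc
  have hreach : Reach α ψ f i u' j y := reach_switch hk hCtj
  obtain ⟨n, ks, ts, hch, hinj⟩ := chain_inj hreach
  have hest := chain_estimate hc hl hK h3 (le_refl y) hch hinj
  have hmono := rd_mono (hc i) (hl i) h3
  linarith

end Core

section IntegralHelpers

theorem convexOn_integral_monotoneOn {α : ℝ} (hα : 0 ≤ α) {G : ℝ → ℝ}
    (hG : MonotoneOn G (Icc 0 α))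
    (hint : ∀ a b, a ∈ Icc 0 α → b ∈ Icc 0 α → IntervalIntegrable G MeasureTheory.volume a b) :
    ConvexOn ℝ (Icc 0 α) (fun X => ∫ s in (0:ℝ)..X, G s) := by
  apply convexOn_of_slope_mono_adjacent (convex_Icc 0 α)
  intro x y z hx hz hxy hyz
  have h0 : (0:ℝ) ∈ Icc 0 α := ⟨le_rfl, hα⟩
  have hyI : y ∈ Icc 0 α := ⟨hx.1.trans hxy.le, hyz.le.trans hz.2⟩
  have hxyint : IntervalIntegrable G MeasureTheory.volume x y := hint x y hx hyI
  have hyzint : IntervalIntegrable G MeasureTheory.volume y z := hint y z hyI hz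
  have e1 : (∫ s in (0:ℝ)..y, G s) - ∫ s in (0:ℝ)..x, G s = ∫ s in x..y, G s := by
    rw [← intervalIntegral.integral_add_adjacent_intervals (hint 0 x h0 hx) hxyint]
    ring
  have e2 : (∫ s in (0:ℝ)..z, G s) - ∫ s in (0:ℝ)..y, G s = ∫ s in y..z, G s := by
    rw [← intervalIntegral.integral_add_adjacent_intervals (hint 0 y h0 hyI) hyzint]
    ring
  have hb1 : ∫ s in x..y, G s ≤ G y * (y - x) := by
    have hle : ∀ s ∈ Icc x y, G s ≤ G y := fun s hs =>
      hG ⟨hx.1.trans hs.1, hs.2.trans hyI.2⟩ hyI hs.2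
    calc ∫ s in x..y, G s ≤ ∫ _s in x..y, G y :=
          intervalIntegral.integral_mono_on hxy.le hxyint intervalIntegrable_const hle
    _ = G y * (y - x) := by rw [intervalIntegral.integral_const, smul_eq_mul]; ring
  have hb2 : G y * (z - y) ≤ ∫ s in y..z, G s := by
    have hle : ∀ s ∈ Icc y z, G y ≤ G s := fun s hs =>
      hG hyI ⟨hyI.1.trans hs.1, hs.2.trans hz.2⟩ hs.1
    calc G y * (z - y) = ∫ _s in y..z, G y := by
          rw [intervalIntegral.integral_const, smul_eq_mul]; ring
    _ ≤ ∫ s in y..z, G s :=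
          intervalIntegral.integral_mono_on hyz.le intervalIntegrable_const hyzint hle
  rw [e1, e2, div_le_div_iff₀ (by linarith) (by linarith)]
  nlinarith [hb1, hb2, sub_pos.2 hxy, sub_pos.2 hyz]

theorem lipschitzOnWith_integral {α C : ℝ} (hC : 0 ≤ C) {G : ℝ → ℝ}
    (hbound : ∀ s ∈ Icc 0 α, |G s| ≤ C)
    (hint : ∀ a b, a ∈ Icc 0 α → b ∈ Icc 0 α → IntervalIntegrable G MeasureTheory.volume a b)
    (hα : 0 ≤ α) :
    LipschitzOnWith C.toNNReal (fun X => ∫ s in (0:ℝ)..X, G s) (Icc 0 α) := by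
  apply LipschitzOnWith.of_dist_le_mul
  intro a ha b hb
  rw [Real.dist_eq, Real.dist_eq]
  have h0 : (0:ℝ) ∈ Icc 0 α := ⟨le_rfl, hα⟩
  have e : (∫ s in (0:ℝ)..a, G s) - ∫ s in (0:ℝ)..b, G s = ∫ s in b..a, G s := by
    rw [← intervalIntegral.integral_add_adjacent_intervals (hint 0 b h0 hb) (hint b a hb ha)]
    ring
  rw [e]
  have hsub : Set.uIoc b a ⊆ Icc 0 α := fun s hs => by
    rw [Set.mem_uIoc] at hs
    rcases hs with ⟨h1, h2⟩ | ⟨h1, h2⟩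
    · exact ⟨hb.1.trans h1.le, h2.trans ha.2⟩
    · exact ⟨ha.1.trans h1.le, h2.trans hb.2⟩
  have hnorm := intervalIntegral.norm_integral_le_of_norm_le_const (C := C) (f := G)
    (a := b) (b := a) (fun s hs => by rw [Real.norm_eq_abs]; exact hbound s (hsub hs))
  rw [Real.norm_eq_abs] at hnorm
  calc |∫ s in b..a, G s| ≤ C * |a - b| := hnorm
  _ = (C.toNNReal : ℝ) * |a - b| := by rw [Real.coe_toNNReal C hC]

end IntegralHelpers

theorem core {α K : ℝ} {p : ℕ} {ψ : Fin p → ℝ → ℝ} {f : ℝ → ℝ}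
    (hα : 0 < α) (hc : ∀ i, ConvexOn ℝ univ (ψ i))
    (hl : ∀ (i : Fin p) (x y : ℝ), |ψ i x - ψ i y| ≤ K * |x - y|) (hK : 0 ≤ K)
    (hψcont : ∀ i, Continuous (ψ i)) (hf : ContinuousOn f (Icc 0 α))
    (hsel : ∀ x ∈ Ioo 0 α, ∃ i, f x = ψ i x) :
    ∃ y₁ y₂ : ℝ → ℝ, ConvexOn ℝ (Icc 0 α) y₁ ∧ ConvexOn ℝ (Icc 0 α) y₂ ∧
      (∃ K₁ : NNReal, LipschitzOnWith K₁ y₁ (Icc 0 α)) ∧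
      (∃ K₂ : NNReal, LipschitzOnWith K₂ y₂ (Icc 0 α)) ∧
      ∀ x ∈ Icc 0 α, f x = y₁ x - y₂ x := by
  classical
  have hrd := fun x (hx : x ∈ Ico 0 α) => exists_rightDeriv hα hc hl hψcont hf hsel hx
  set D : ℝ → ℝ := fun x => if hx : x ∈ Ico 0 α then (hrd x hx).choose else K with hD
  have hDtendsto : ∀ x, ∀ hx : x ∈ Ico 0 α, Tendsto (slope f x) (𝓝[>] x) (𝓝 (D x)) := by
    intro x hx
    have : D x = (hrd x hx).choose := by rw [hD]; simp only [dif_pos hx]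
    rw [this]
    exact (hrd x hx).choose_spec.1
  have hDrep : ∀ x, ∀ hx : x ∈ Ico 0 α, ∃ i, (lif α ψ f i x).NeBot ∧ rd (ψ i) x = D x := by
    intro x hx
    have : D x = (hrd x hx).choose := by rw [hD]; simp only [dif_pos hx]
    rw [this]
    exact (hrd x hx).choose_spec.2.2
  have hDbound : ∀ x ∈ Icc 0 α, |D x| ≤ K := by
    intro x hx
    by_cases hx' : x ∈ Ico 0 α
    · obtain ⟨i, _, heq⟩ := hDrep x hx'
      rw [← heq]
      exact abs_rd_le (hc i) (hl i) x
    · have : D x = K := by rw [hD]; simp only [dif_neg hx']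
      rw [this, abs_of_nonneg hK]
  set M : ℝ → ℝ := fun x => D x + NN ψ x with hM
  have hMmono : MonotoneOn M (Icc 0 α) := by
    intro a ha b hb hab
    rcases eq_or_lt_of_le hab with rfl | hlt
    · exact le_rfl
    have hNN := NN_mono hc hl hK hab
    rcases eq_or_lt_of_le hb.2 with hbα | hbα
    · have hbIco : b ∉ Ico 0 α := fun hmem => absurd hmem.2 (by rw [hbα]; exact lt_irrefl _)
      have hDb : D b = K := by rw [hD]; simp only [dif_neg hbIco]
      have haIcc : a ∈ Icc 0 α := ha
      have hDa := hDbound a haIcc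
      simp only [hM]
      have : D a ≤ K := le_of_abs_le hDa
      rw [hDb]
      linarith
    · have haIco : a ∈ Ico 0 α := ⟨ha.1, hlt.trans hbα⟩
      have hbIco : b ∈ Ico 0 α := ⟨hb.1, hbα⟩
      obtain ⟨i, hi, hieq⟩ := hDrep a haIco
      obtain ⟨j, hj, hjeq⟩ := hDrep b hbIco
      have hjord := jordan_step hα hc hl hK hψcont hf hsel haIco hbIco hlt hi hj
      simp only [hM]
      rw [← hieq, ← hjeq]
      linarith
  have hNNmono : Monotone (NN ψ) := fun a b hab => NN_mono hc hl hK hab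
  have hMint : ∀ a b, a ∈ Icc 0 α → b ∈ Icc 0 α → IntervalIntegrable M MeasureTheory.volume a b := by
    intro a b ha hb
    apply MonotoneOn.intervalIntegrable
    intro s hs t ht hst
    have hsub : uIcc a b ⊆ Icc 0 α := uIcc_subset_Icc ha hb
    exact hMmono (hsub hs) (hsub ht) hst
  have hNNint : ∀ a b : ℝ, IntervalIntegrable (NN ψ) MeasureTheory.volume a b := fun a b =>
    hNNmono.intervalIntegrable
  have hDint : ∀ a b, a ∈ Icc 0 α → b ∈ Icc 0 α → IntervalIntegrable D MeasureTheory.volume a b := by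
    intro a b ha hb
    have : D = fun t => M t - NN ψ t := by funext t; simp [hM]
    rw [this]
    exact (hMint a b ha hb).sub (hNNint a b)
  have hFTC : ∀ X ∈ Icc 0 α, ∫ s in (0:ℝ)..X, D s = f X - f 0 := by
    intro X hX
    have h0 : (0:ℝ) ∈ Icc 0 α := ⟨le_rfl, hα.le⟩
    refine intervalIntegral.integral_eq_sub_of_hasDeriv_right_of_le hX.1
      (hf.mono (Icc_subset_Icc le_rfl hX.2)) ?_ (hDint 0 X h0 hX)
    intro t ht
    have htIco : t ∈ Ico 0 α := ⟨ht.1.le, lt_of_lt_of_le ht.2 hX.2⟩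
    rw [hasDerivWithinAt_iff_tendsto_slope]
    have hdiff : Ioi t \ {t} = Ioi t := diff_singleton_eq_self (fun h => lt_irrefl t h)
    rw [hdiff]
    exact hDtendsto t htIco
  refine ⟨fun X => f 0 + ∫ s in (0:ℝ)..X, M s, fun X => ∫ s in (0:ℝ)..X, NN ψ s, ?_, ?_, ?_, ?_, ?_⟩
  · -- convexity of y₁
    have hconv : ConvexOn ℝ (Icc 0 α) (fun X => ∫ s in (0:ℝ)..X, M s) :=
      convexOn_integral_monotoneOn hα.le hMmono hMint
    have := (convexOn_const (f 0) (convex_Icc (0:ℝ) α)).add hconv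
    exact this
  · exact convexOn_integral_monotoneOn hα.le (hNNmono.monotoneOn _)
      (fun a b _ _ => hNNint a b)
  · -- Lipschitz of y₁
    set C : ℝ := K + (p * p : ℝ) * (6 * K) with hC
    have hC0 : 0 ≤ C := by positivity
    have hbound : ∀ s ∈ Icc 0 α, |M s| ≤ C := by
      intro s hs
      have h1 := hDbound s hs
      have h2 := NN_nonneg hc hl hK s
      have h3 := NN_le hc hl hK s
      rw [abs_le] at h1 ⊢
      constructor <;> simp only [hM] <;> [linarith; linarith]
    have hlip := lipschitzOnWith_integral hC0 hbound hMint hα.le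
    refine ⟨C.toNNReal, ?_⟩
    intro u hu v hv
    have := hlip hu hv
    simpa [edist_dist, dist_add_left] using this
  · set C : ℝ := (p * p : ℝ) * (6 * K) with hC
    have hC0 : 0 ≤ C := by positivity
    have hbound : ∀ s ∈ Icc 0 α, |NN ψ s| ≤ C := by
      intro s hs
      rw [abs_of_nonneg (NN_nonneg hc hl hK s)]
      exact NN_le hc hl hK s
    exact ⟨C.toNNReal, lipschitzOnWith_integral hC0 hbound (fun a b _ _ => hNNint a b) hα.le⟩
  · intro X hX
    have h0 : (0:ℝ) ∈ Icc 0 α := ⟨le_rfl, hα.le⟩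
    have hMeq : ∫ s in (0:ℝ)..X, M s =
        (∫ s in (0:ℝ)..X, D s) + ∫ s in (0:ℝ)..X, NN ψ s := by
      rw [← intervalIntegral.integral_add (hDint 0 X h0 hX) (hNNint 0 X)]
    show f X = (f 0 + ∫ s in (0:ℝ)..X, M s) - ∫ s in (0:ℝ)..X, NN ψ s
    rw [hMeq, hFTC X hX]
    ring

end DCMix

open Set

/-- A function on `ℝ` is Lipschitz DC if it is a difference of two convex Lipschitz
functions. -/
def IsLipschitzDC (f : ℝ → ℝ) : Prop :=
  ∃ c₁ c₂ : ℝ → ℝ, ConvexOn ℝ univ c₁ ∧ ConvexOn ℝ univ c₂ ∧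
    (∃ K₁ : NNReal, LipschitzWith K₁ c₁) ∧ (∃ K₂ : NNReal, LipschitzWith K₂ c₂) ∧
    ∀ x, f x = c₁ x - c₂ x

/-- If `g` is continuous on `[0, α]` and at each point of `(0, α)` coincides with one of
finitely many Lipschitz DC functions on `ℝ`, then `g` is a difference of two convex
Lipschitz functions on `[0, α]`. -/
theorem isLipschitzDC_on_Icc_of_continuous_of_mem_finite_family
    (α : ℝ) (hα : 0 < α) (p : ℕ) (φ : Fin p → ℝ → ℝ)
    (hφ : ∀ i, IsLipschitzDC (φ i))
    (g : ℝ → ℝ) (hg : ContinuousOn g (Icc 0 α))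
    (hmem : ∀ x ∈ Ioo (0 : ℝ) α, ∃ i : Fin p, g x = φ i x) :
    ∃ y₁ y₂ : ℝ → ℝ,
      ConvexOn ℝ (Icc 0 α) y₁ ∧ ConvexOn ℝ (Icc 0 α) y₂ ∧
      (∃ K₁ : NNReal, LipschitzOnWith K₁ y₁ (Icc 0 α)) ∧
      (∃ K₂ : NNReal, LipschitzOnWith K₂ y₂ (Icc 0 α)) ∧
      ∀ x ∈ Icc (0 : ℝ) α, g x = y₁ x - y₂ x := by
  classical
  choose c₁ c₂ hconv₁ hconv₂ hlip₁ hlip₂ hrepr using hφ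
  choose K₁ hK₁ using hlip₁
  choose K₂ hK₂ using hlip₂
  have lipreal : ∀ (c : ℝ → ℝ) (Kc : NNReal), LipschitzWith Kc c →
      ∀ x y : ℝ, |c x - c y| ≤ (Kc : ℝ) * |x - y| := by
    intro c Kc hlc x y
    have := hlc.dist_le_mul x y
    simpa [Real.dist_eq] using this
  set F : ℝ → ℝ := fun x => ∑ i, c₂ i x with hF
  set ψ : Fin p → ℝ → ℝ := fun i x => c₁ i x + (F x - c₂ i x) with hψ
  set f : ℝ → ℝ := fun x => g x + F x with hf
  -- convexity of partial sums of the c₂'s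
  have sumconv : ∀ s : Finset (Fin p), ConvexOn ℝ univ (fun x => ∑ j ∈ s, c₂ j x) := by
    intro s
    induction s using Finset.induction_on with
    | empty => simpa using convexOn_const (0 : ℝ) convex_univ
    | @insert a s ha IH =>
      have h2 := (hconv₂ a).add IH
      have : (fun x => ∑ j ∈ insert a s, c₂ j x) = fun x => c₂ a x + ∑ j ∈ s, c₂ j x := by
        funext x; exact Finset.sum_insert ha
      rw [this]
      exact h2
  have hconvψ : ∀ i, ConvexOn ℝ univ (ψ i) := by
    intro i
    have h1 : (fun x => ∑ j ∈ Finset.univ.erase i, c₂ j x) = fun x => F x - c₂ i x := by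
      funext x
      rw [hF, eq_sub_iff_add_eq]
      exact Finset.sum_erase_add _ _ (Finset.mem_univ i)
    have h2 := (hconv₁ i).add (h1 ▸ sumconv (Finset.univ.erase i))
    exact h2
  -- Lipschitz bounds
  set S₁ : ℝ := ∑ i, (K₁ i : ℝ) with hS₁
  set S₂ : ℝ := ∑ i, (K₂ i : ℝ) with hS₂
  have hS₁0 : 0 ≤ S₁ := Finset.sum_nonneg fun i _ => (K₁ i).coe_nonneg
  have hS₂0 : 0 ≤ S₂ := Finset.sum_nonneg fun i _ => (K₂ i).coe_nonneg
  have hFlip : ∀ x y : ℝ, |F x - F y| ≤ S₂ * |x - y| := by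
    intro x y
    rw [hF]
    calc |(∑ i, c₂ i x) - ∑ i, c₂ i y| = |∑ i, (c₂ i x - c₂ i y)| := by
          rw [Finset.sum_sub_distrib]
    _ ≤ ∑ i, |c₂ i x - c₂ i y| := Finset.abs_sum_le_sum_abs _ _
    _ ≤ ∑ i, (K₂ i : ℝ) * |x - y| := Finset.sum_le_sum fun i _ => lipreal _ _ (hK₂ i) x y
    _ = S₂ * |x - y| := by rw [hS₂, Finset.sum_mul]
  set K : ℝ := S₁ + 2 * S₂ with hKdef
  have hK0 : 0 ≤ K := by linarith
  have hlψ : ∀ (i : Fin p) (x y : ℝ), |ψ i x - ψ i y| ≤ K * |x - y| := by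
    intro i x y
    have e : ψ i x - ψ i y = (c₁ i x - c₁ i y) + (F x - F y) - (c₂ i x - c₂ i y) := by
      simp only [hψ]; ring
    have b1 := lipreal _ _ (hK₁ i) x y
    have b2 := hFlip x y
    have b3 := lipreal _ _ (hK₂ i) x y
    have m1 : (K₁ i : ℝ) ≤ S₁ :=
      Finset.single_le_sum (fun j _ => (K₁ j).coe_nonneg) (Finset.mem_univ i)
    have m2 : (K₂ i : ℝ) ≤ S₂ :=
      Finset.single_le_sum (fun j _ => (K₂ j).coe_nonneg) (Finset.mem_univ i)
    have habs : |ψ i x - ψ i y| ≤ |c₁ i x - c₁ i y| + |F x - F y| + |c₂ i x - c₂ i y| := by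
      rw [e]
      calc |c₁ i x - c₁ i y + (F x - F y) - (c₂ i x - c₂ i y)|
          ≤ |c₁ i x - c₁ i y + (F x - F y)| + |c₂ i x - c₂ i y| := abs_sub _ _
      _ ≤ |c₁ i x - c₁ i y| + |F x - F y| + |c₂ i x - c₂ i y| := by
          have := abs_add_le (c₁ i x - c₁ i y) (F x - F y)
          linarith
    have hxy0 : (0:ℝ) ≤ |x - y| := abs_nonneg _
    nlinarith [mul_le_mul_of_nonneg_right m1 hxy0, mul_le_mul_of_nonneg_right m2 hxy0]
  have hFcont : Continuous F := by
    apply continuous_finset_sum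
    intro i _
    exact (hK₂ i).continuous
  have hψcont : ∀ i, Continuous (ψ i) := fun i =>
    ((hK₁ i).continuous.add (hFcont.sub (hK₂ i).continuous))
  have hfcont : ContinuousOn f (Icc 0 α) := hg.add hFcont.continuousOn
  have hfsel : ∀ x ∈ Ioo 0 α, ∃ i, f x = ψ i x := by
    intro x hx
    obtain ⟨i, hi⟩ := hmem x hx
    refine ⟨i, ?_⟩
    simp only [hf, hψ]
    rw [hi, hrepr i x]
    ring
  obtain ⟨z₁, z₂, hz₁conv, hz₂conv, ⟨L₁, hL₁⟩, ⟨L₂, hL₂⟩, hzeq⟩ :=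
    DCMix.core hα hconvψ hlψ hK0 hψcont hfcont hfsel
  refine ⟨z₁, fun x => z₂ x + F x, hz₁conv, ?_, ⟨L₁, hL₁⟩, ?_, ?_⟩
  · have hFconvIcc : ConvexOn ℝ (Icc 0 α) F :=
      (sumconv Finset.univ).subset (subset_univ _) (convex_Icc 0 α)
    exact hz₂conv.add hFconvIcc
  · refine ⟨L₂ + S₂.toNNReal, ?_⟩
    apply LipschitzOnWith.of_dist_le_mul
    intro u hu v hv
    have d1 : dist (z₂ u) (z₂ v) ≤ (L₂ : ℝ) * dist u v := hL₂.dist_le_mul u hu v hv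
    have d2 : |F u - F v| ≤ S₂ * |u - v| := hFlip u v
    rw [Real.dist_eq, Real.dist_eq] at d1 ⊢
    have e : z₂ u + F u - (z₂ v + F v) = (z₂ u - z₂ v) + (F u - F v) := by ring
    rw [e]
    have habs := abs_add_le (z₂ u - z₂ v) (F u - F v)
    have hcoe : ((L₂ + S₂.toNNReal : NNReal) : ℝ) = (L₂ : ℝ) + S₂ := by
      rw [NNReal.coe_add, Real.coe_toNNReal S₂ hS₂0]
    rw [hcoe, add_mul]
    linarith
  · intro x hx
    have h := hzeq x hx
    show g x = z₁ x - (z₂ x + F x)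
    have hfx : f x = g x + F x := rfl
    rw [hfx] at h
    linarith
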